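/- The function g(k) = 2^k·(ln 2)·( ((k+1)/2^k)^2·(k/2^k) + 2·√( ((k+1)/2^k)^2·(1/2^k)·(1 − ((k+1)/2^k)^3) ) ) (i.e., g(k) = 2^k·ln 2 / r(k,3)) is strictly decreasing in the integer variable k for k ≥ 7. -/

import Mathlib

/-- `g(k) = 2^k * ln 2 * ( ((k+1)/2^k)^2 * (k/2^k)
  + 2 * √( ((k+1)/2^k)^2 * (1/2^k) * (1 - ((k+1)/2^k)^3) ) )`,
i.e. `g(k) = 2^k * ln 2 / r(k,3)`. -/
noncomputable def g (k : ℕ) : ℝ :=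
  2 ^ k * Real.log 2 * ( ((k + 1 : ℝ) / 2 ^ k) ^ 2 * (k / 2 ^ k)
    + 2 * Real.sqrt (((k + 1 : ℝ) / 2 ^ k) ^ 2 * (1 / 2 ^ k)
        * (1 - ((k + 1 : ℝ) / 2 ^ k) ^ 3)) )

lemma nat_key (k : ℕ) (hk : 7 ≤ k) : 2*(k+1)^5 + 2*8^k ≤ k^2 * 8^k := by
  induction k, hk using Nat.le_induction with
  | base => norm_num
  | succ n hn ih =>
    have h1 : (n+2)^5 ≤ 8*(n+1)^5 := by
      nlinarith [Nat.pow_le_pow_left (show 2*(n+2) ≤ 3*(n+1) by omega) 5]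
    have h2 : n^2*8^n ≤ (n+1)^2*8^n := Nat.mul_le_mul_right _ (by nlinarith)
    rw [pow_succ 8 n]
    nlinarith [ih, h1, h2]

lemma g_eq (k : ℕ) : g k = Real.log 2 * ((k:ℝ)*((k:ℝ)+1)^2/4^k
    + 2*Real.sqrt (((k:ℝ)+1)^2/2^k - ((k:ℝ)+1)^5/16^k)) := by
  unfold g
  have h16 : (16:ℝ)^k = (2^k)^4 := by
    rw [show (16:ℝ) = 2^4 by norm_num, ← pow_mul, ← pow_mul, mul_comm]
  have h8 : (8:ℝ)^k = (2^k)^3 := by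
    rw [show (8:ℝ) = 2^3 by norm_num, ← pow_mul, ← pow_mul, mul_comm]
  have h4 : (4:ℝ)^k = (2^k)^2 := by
    rw [show (4:ℝ) = 2^2 by norm_num, ← pow_mul, ← pow_mul, mul_comm]
  have hx : (0:ℝ) < 2^k := by positivity
  have key : Real.sqrt (((k + 1 : ℝ) / 2 ^ k) ^ 2 * (1 / 2 ^ k) * (1 - ((k + 1 : ℝ) / 2 ^ k) ^ 3))
      = (2^k)⁻¹ * Real.sqrt (((k:ℝ)+1)^2/2^k - ((k:ℝ)+1)^5/16^k) := by
    rw [show (((k + 1 : ℝ) / 2 ^ k) ^ 2 * (1 / 2 ^ k) * (1 - ((k + 1 : ℝ) / 2 ^ k) ^ 3))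
        = ((2^k)⁻¹)^2 * (((k:ℝ)+1)^2/2^k - ((k:ℝ)+1)^5/16^k) from by
          rw [h16]; field_simp,
      Real.sqrt_mul (by positivity), Real.sqrt_sq (by positivity)]
  rw [key, h4]
  field_simp

lemma g_step (k : ℕ) (hk : 7 ≤ k) : g (k+1) < g k := by
  rw [g_eq, g_eq]
  have hlog : 0 < Real.log 2 := Real.log_pos (by norm_num)
  have hk' : (7:ℝ) ≤ (k:ℝ) := by exact_mod_cast hk
  have hx : (0:ℝ) < 2^k := by positivity
  have h16 : (16:ℝ)^k = (2^k)^4 := by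
    rw [show (16:ℝ) = 2^4 by norm_num, ← pow_mul, ← pow_mul, mul_comm]
  have h8 : (8:ℝ)^k = (2^k)^3 := by
    rw [show (8:ℝ) = 2^3 by norm_num, ← pow_mul, ← pow_mul, mul_comm]
  have keyN := nat_key k hk
  have key : 2*((k:ℝ)+1)^5 + 2*((2:ℝ)^k)^3 ≤ (k:ℝ)^2*((2:ℝ)^k)^3 := by
    rw [← h8]
    exact_mod_cast keyN
  apply mul_lt_mul_of_pos_left _ hlog
  push_cast
  have hA : ((k:ℝ)+1)*(((k:ℝ)+1)+1)^2/4^(k+1) < (k:ℝ)*((k:ℝ)+1)^2/4^k := by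
    rw [div_lt_div_iff₀ (by positivity) (by positivity), pow_succ (4:ℝ) k]
    have hp : (0:ℝ) < 4^k := by positivity
    have hq : ((k:ℝ)+1)*(((k:ℝ)+1)+1)^2 < 4*((k:ℝ)*((k:ℝ)+1)^2) := by nlinarith
    nlinarith [mul_lt_mul_of_pos_right hq hp]
  have hb2 : (((k:ℝ)+1)+1)^2/2^(k+1) ≤ ((k:ℝ)+1)^2/2^k - ((k:ℝ)+1)^5/16^k := by
    rw [h16, pow_succ (2:ℝ) k, div_sub_div _ _ (ne_of_gt hx) (by positivity),
      div_le_div_iff₀ (by positivity) (by positivity)]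
    nlinarith [mul_le_mul_of_nonneg_right key (by positivity : (0:ℝ) ≤ ((2:ℝ)^k)^2), hx]
  have hnn : (0:ℝ) ≤ (((k:ℝ)+1)+1)^5/16^(k+1) := by positivity
  have hB : (((k:ℝ)+1)+1)^2/2^(k+1) - (((k:ℝ)+1)+1)^5/16^(k+1)
      ≤ ((k:ℝ)+1)^2/2^k - ((k:ℝ)+1)^5/16^k := by linarith
  have hs := Real.sqrt_le_sqrt hB
  linarith

/-- The function `g(k) = 2^k * ln 2 / r(k,3)` is strictly decreasing in the integer
variable `k` for `k ≥ 7`. -/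
theorem g_strictAntiOn : StrictAntiOn g (Set.Ici 7) := by
  have main : ∀ m : ℕ, 7 ≤ m → ∀ n : ℕ, m < n → g n < g m := by
    intro m hm n hmn
    induction n, hmn using Nat.le_induction with
    | base => exact g_step m hm
    | succ n hn ih => exact (g_step n (le_trans hm (Nat.le_of_succ_le hn))).trans ih
  intro m hm n _ hmn
  exact main m hm n hmn
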